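/- Let p be a C² 2π-periodic support function with p+p''>0, constant width, and Steiner point at the origin. Then π|F_e| − Δ ≥ 20π δ₂² and moreover |F_e| ≥ 36 δ₂², where δ₂² = π Σ_{n≥2} cₙ². Equality holds iff cₙ = 0 for n ≥ 5 (equivalently for n ≥ 4 together with n even forced to vanish). -/

import Mathlib

open Real intervalIntegral MeasureTheory Set
open scoped ComplexConjugate

noncomputable def cc (f : ℝ → ℝ) (n : ℤ) : ℂ :=
  fourierCoeffOn Real.two_pi_pos (fun x => (f x : ℂ)) n

lemma cc_eq (f : ℝ → ℝ) (n : ℤ) :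
    cc f n = (1/(2*π) : ℂ) * ∫ x in (0:ℝ)..(2*π),
      ((Real.cos (n*x) : ℂ) - Complex.I * (Real.sin (n*x) : ℂ)) * (f x : ℂ) := by
  rw [cc, fourierCoeffOn_eq_integral]
  have h1 : ∀ x : ℝ, (fourier (-n) (x : AddCircle (2*π - 0)) : ℂ)
      = (Real.cos (n*x) : ℂ) - Complex.I * (Real.sin (n*x) : ℂ) := by
    intro x
    rw [fourier_coe_apply]
    have h2 : 2 * (π:ℂ) * Complex.I * ((-n : ℤ):ℂ) * x / ((2*π - 0 : ℝ):ℂ)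
        = -((n*x : ℝ):ℂ) * Complex.I := by
      have : ((2*π - 0 : ℝ):ℂ) = 2 * (π:ℂ) := by push_cast; ring
      rw [this]
      have hπ : (π:ℂ) ≠ 0 := by exact_mod_cast Real.pi_ne_zero
      field_simp
      push_cast
      ring
    rw [h2, Complex.exp_mul_I]
    push_cast
    simp [Complex.cos_neg, Complex.sin_neg, Complex.ofReal_cos, Complex.ofReal_sin]
    ring
  simp only [smul_eq_mul, h1]
  norm_num

lemma cc_re_im (f : ℝ → ℝ) (hf : Continuous f) (n : ℤ) :
    cc f n = ((((1/(2*π)) * ∫ x in (0:ℝ)..(2*π), f x * Real.cos (n*x)) : ℝ) : ℂ)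
           - Complex.I * ((((1/(2*π)) * ∫ x in (0:ℝ)..(2*π), f x * Real.sin (n*x)) : ℝ) : ℂ) := by
  rw [cc_eq]
  have h1 : IntervalIntegrable (fun x => ((f x * Real.cos (n*x) : ℝ) : ℂ)) volume 0 (2*π) :=
    (Complex.continuous_ofReal.comp (hf.mul (Real.continuous_cos.comp (continuous_const.mul continuous_id)))).intervalIntegrable _ _
  have h2 : IntervalIntegrable (fun x => (Complex.I * ((f x * Real.sin (n*x) : ℝ) : ℂ))) volume 0 (2*π) :=
    (continuous_const.mul (Complex.continuous_ofReal.comp (hf.mul (Real.continuous_sin.comp (continuous_const.mul continuous_id))))).intervalIntegrable _ _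
  have h3 : ∀ x : ℝ, ((Real.cos (n*x) : ℂ) - Complex.I * (Real.sin (n*x) : ℂ)) * (f x : ℂ)
      = ((f x * Real.cos (n*x) : ℝ) : ℂ) - Complex.I * ((f x * Real.sin (n*x) : ℝ) : ℂ) := by
    intro x; push_cast; ring
  simp only [h3]
  rw [intervalIntegral.integral_sub h1 h2, intervalIntegral.integral_const_mul,
    intervalIntegral.integral_ofReal, intervalIntegral.integral_ofReal]
  push_cast
  ring

lemma normsq_aux (r s : ℝ) : ‖((r:ℂ) - Complex.I * (s:ℂ))‖^2 = r^2 + s^2 := by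
  rw [Complex.sq_norm, Complex.normSq_apply]
  simp
  ring

lemma fourierCoeffOn_eq_of_eq {a b b' : ℝ} (h : a < b) (h' : a < b') (hbb : b = b')
    (f : ℝ → ℂ) (n : ℤ) : fourierCoeffOn h f n = fourierCoeffOn h' f n := by subst hbb; rfl

lemma parseval (f : ℝ → ℝ) (hf : Continuous f) (hper : Function.Periodic f (2*π)) :
    HasSum (fun n : ℤ => ‖cc f n‖^2) ((1/(2*π)) * ∫ x in (0:ℝ)..(2*π), (f x)^2) := by
  haveI : Fact (0 < 2*π) := ⟨Real.two_pi_pos⟩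
  set F : ℝ → ℂ := fun x => (f x : ℂ) with hF
  have FC : Continuous F := Complex.continuous_ofReal.comp hf
  have hper0 : f (2*π) = f 0 := by have := hper 0; rwa [zero_add] at this
  have h0 : F 0 = F (0 + 2*π) := by simp [hF, hper0]
  have h0' : F 0 = F (2*π) := by simp [hF, hper0]
  set G : C(AddCircle (2*π), ℂ) :=
    ⟨AddCircle.liftIco (2*π) 0 F, AddCircle.liftIco_zero_continuous h0' FC.continuousOn⟩ with hG
  have hcc : ∀ n : ℤ, fourierCoeff (G : AddCircle (2*π) → ℂ) n = cc f n := by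
    intro n
    have := fourierCoeff_liftIco_eq (T := 2*π) (a := 0) F n
    rw [hG]
    simp only [ContinuousMap.coe_mk]
    rw [this]
    exact fourierCoeffOn_eq_of_eq _ _ (by ring) F n
  have hGF : ∀ x ∈ Icc (0:ℝ) (2*π), (G : AddCircle (2*π) → ℂ) ↑x = F x := by
    intro x hx
    rcases eq_or_lt_of_le hx.2 with h | h
    · subst h
      have : ((2*π : ℝ) : AddCircle (2*π)) = ((0:ℝ) : AddCircle (2*π)) := by
        have := AddCircle.coe_add_period (2*π) 0
        rwa [zero_add] at this
      rw [hG]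
      simp only [ContinuousMap.coe_mk, this]
      rw [AddCircle.liftIco_coe_apply (by constructor <;> simp [Real.pi_pos, Real.two_pi_pos, Real.two_pi_pos.le])]
      exact h0'
    · rw [hG]
      simp only [ContinuousMap.coe_mk]
      exact AddCircle.liftIco_coe_apply ⟨hx.1, by simpa using h⟩
  -- Parseval on the circle
  set Gl := ContinuousMap.toLp (E := ℂ) 2 AddCircle.haarAddCircle ℂ G with hGl
  have P := tsum_sq_fourierCoeff Gl
  have hrepr : ∀ n : ℤ, fourierCoeff (Gl : AddCircle (2*π) → ℂ) n = cc f n := by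
    intro n
    rw [hGl, fourierCoeff_toLp]
    exact hcc n
  have hsummable : Summable (fun n : ℤ => ‖fourierCoeff (Gl : AddCircle (2*π) → ℂ) n‖^2) := by
    have h1 := Memℓp.summable (p := 2) (by norm_num) (lp.memℓp (fourierBasis.repr Gl))
    have h2 : ∀ n : ℤ, ‖fourierBasis.repr Gl n‖ ^ ((2:ENNReal).toReal)
        = ‖fourierCoeff (Gl : AddCircle (2*π) → ℂ) n‖^2 := by
      intro n
      rw [fourierBasis_repr]
      norm_num
    simpa only [h2] using h1
  have hint : ∫ t : AddCircle (2*π), ‖(Gl : AddCircle (2*π) → ℂ) t‖^2 ∂AddCircle.haarAddCircle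
      = (1/(2*π)) * ∫ x in (0:ℝ)..(2*π), (f x)^2 := by
    have hae : (Gl : AddCircle (2*π) → ℂ) =ᵐ[AddCircle.haarAddCircle] (G : AddCircle (2*π) → ℂ) :=
      ContinuousMap.coeFn_toLp (p := 2) (𝕜 := ℂ) AddCircle.haarAddCircle G
    rw [integral_congr_ae (hae.mono (fun t ht => by rw [ht]))]
    have hpre := AddCircle.intervalIntegral_preimage (2*π) 0
      (fun t : AddCircle (2*π) => ‖(G : AddCircle (2*π) → ℂ) t‖^2)
    have hvol : ∫ t : AddCircle (2*π), ‖(G : AddCircle (2*π) → ℂ) t‖^2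
        = (2*π) * ∫ t : AddCircle (2*π), ‖(G : AddCircle (2*π) → ℂ) t‖^2 ∂AddCircle.haarAddCircle := by
      rw [AddCircle.volume_eq_smul_haarAddCircle, MeasureTheory.integral_smul_measure,
        ENNReal.toReal_ofReal Real.two_pi_pos.le, smul_eq_mul]
    have hiv : ∫ x in (0:ℝ)..(0 + 2*π), ‖(G : AddCircle (2*π) → ℂ) ↑x‖^2
        = ∫ x in (0:ℝ)..(2*π), (f x)^2 := by
      rw [zero_add]
      apply intervalIntegral.integral_congr
      intro x hx
      rw [Set.uIcc_of_le Real.two_pi_pos.le] at hx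
      show ‖G ↑x‖^2 = f x ^ 2
      rw [hGF x hx]
      simp [hF, sq_abs]
    rw [← hiv, hpre, hvol]
    field_simp
  rw [hint] at P
  simp only [hrepr] at P hsummable
  rw [← P]
  exact hsummable.hasSum

lemma cc_deriv (f f' : ℝ → ℝ) (hf : ∀ x, HasDerivAt f (f' x) x) (hc : Continuous f')
    (hper : f (2*π) = f 0) (n : ℤ) (hn : n ≠ 0) :
    cc f' n = Complex.I * n * cc f n := by
  have hIn : (Complex.I * n) ≠ 0 := by
    simp [Complex.I_ne_zero, hn]
  have h := fourierCoeffOn_of_hasDerivAt (f := fun x => (f x : ℂ)) (f' := fun x => (f' x : ℂ))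
    Real.two_pi_pos hn (fun x _ => (hf x).ofReal_comp)
    ((Complex.continuous_ofReal.comp hc).intervalIntegrable _ _)
  have hz : ((f (2*π) : ℂ)) - ((f 0 : ℂ)) = 0 := by rw [hper]; ring
  rw [hz, mul_zero, zero_sub] at h
  have hπ : (π:ℂ) ≠ 0 := by exact_mod_cast Real.pi_ne_zero
  have hn' : (n:ℂ) ≠ 0 := by exact_mod_cast hn
  have h2 : cc f n = 1 / (Complex.I * n) * cc f' n := by
    rw [cc, h]
    show (1:ℂ) / (-2 * ↑π * Complex.I * ↑n) *
      -((((2*π:ℝ):ℂ) - ((0:ℝ):ℂ)) * fourierCoeffOn Real.two_pi_pos (fun x => ((f' x : ℝ):ℂ)) n)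
      = 1 / (Complex.I * ↑n) * cc f' n
    rw [cc]
    push_cast
    field_simp
    ring
  rw [h2]
  field_simp

lemma cc_deriv_zero (f f' : ℝ → ℝ) (hf : ∀ x, HasDerivAt f (f' x) x) (hc : Continuous f')
    (hper : f (2*π) = f 0) : cc f' 0 = 0 := by
  rw [cc_re_im f' hc 0]
  have hi : ∫ x in (0:ℝ)..(2*π), f' x = 0 := by
    rw [intervalIntegral.integral_eq_sub_of_hasDerivAt (fun x _ => hf x)
      (hc.intervalIntegrable _ _), hper, sub_self]
  simp [hi]

lemma cc_deriv_normsq (f f' : ℝ → ℝ) (hf : ∀ x, HasDerivAt f (f' x) x) (hc : Continuous f')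
    (hper : f (2*π) = f 0) (n : ℤ) :
    ‖cc f' n‖^2 = (n:ℝ)^2 * ‖cc f n‖^2 := by
  rcases eq_or_ne n 0 with rfl | hn
  · rw [cc_deriv_zero f f' hf hc hper]
    simp
  · rw [cc_deriv f f' hf hc hper n hn]
    rw [norm_mul, norm_mul, Complex.norm_I, one_mul, Complex.norm_intCast]
    rw [mul_pow, sq_abs]

lemma int_cos_period (n : ℕ) (hn : 1 ≤ n) :
    ∫ x in (0:ℝ)..(2*π), Real.cos (n*x) = 0 := by
  have hne : ((n:ℝ)) ≠ 0 := by positivity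
  rw [intervalIntegral.integral_comp_mul_left (fun x => Real.cos x) hne]
  rw [integral_cos]
  have h1 : Real.sin ((n:ℝ) * (2*π)) = 0 := by
    have : (n:ℝ) * (2*π) = (2*n : ℕ) * π := by push_cast; ring
    rw [this, Real.sin_nat_mul_pi]
  simp [h1]

lemma int_sin_period (n : ℕ) (hn : 1 ≤ n) :
    ∫ x in (0:ℝ)..(2*π), Real.sin (n*x) = 0 := by
  have hne : ((n:ℝ)) ≠ 0 := by positivity
  rw [intervalIntegral.integral_comp_mul_left (fun x => Real.sin x) hne]
  rw [integral_sin]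
  have h1 : Real.cos ((n:ℝ) * (2*π)) = 1 := by
    have : (n:ℝ) * (2*π) = 0 + (n:ℤ) * (2*π) := by push_cast; ring
    rw [this, Real.cos_add_int_mul_two_pi, Real.cos_zero]
  simp [h1]

lemma periodic_deriv_of_periodic (f : ℝ → ℝ) (hf : Function.Periodic f (2*π)) :
    Function.Periodic (deriv f) (2*π) := by
  intro x
  have h1 : (fun y => f (y + 2*π)) = f := funext hf
  calc deriv f (x + 2*π) = deriv (fun y => f (y + 2*π)) x := (deriv_comp_add_const f (2*π) x).symm
  _ = deriv f x := by rw [h1]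

lemma width_coeff_zero (p : ℝ → ℝ) (hc : Continuous p) (hper : Function.Periodic p (2*π))
    (hw : ∀ x, p x + p (x + π) = p 0 + p π)
    (t : ℝ → ℝ) (htc : Continuous t) (htper : Function.Periodic t (2*π))
    (hshift : ∀ y, t (y - π) = t y) (hint : ∫ x in (0:ℝ)..(2*π), t x = 0) :
    ∫ x in (0:ℝ)..(2*π), p x * t x = 0 := by
  have hcshift : Continuous (fun y => p y * t (y - π)) :=
    hc.mul (htc.comp (by continuity))
  have e1 : ∫ x in (0:ℝ)..(2*π), p (x+π) * t x = ∫ x in (0:ℝ)..(2*π), p x * t x := by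
    have e2 : ∀ x:ℝ, p (x+π) * t x = (fun y => p y * t (y - π)) (x + π) := by
      intro x; simp
    have hg2 : Function.Periodic (fun y => p y * t (y - π)) (2*π) := by
      intro y
      have : y + 2*π - π = (y - π) + 2*π := by ring
      simp only [this, htper (y - π), hper y]
    calc ∫ x in (0:ℝ)..(2*π), p (x+π) * t x
        = ∫ x in (0:ℝ)..(2*π), (fun y => p y * t (y - π)) (x + π) := by
          simp only [← e2]
      _ = ∫ y in (0:ℝ)+π..(2*π)+π, (fun y => p y * t (y - π)) y :=
          by exact intervalIntegral.integral_comp_add_right (fun y => p y * t (y - π)) π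
      _ = ∫ y in π..(π+2*π), p y * t (y - π) := by
          rw [zero_add, show (2*π)+π = π+2*π by ring]
      _ = ∫ y in (0:ℝ)..(0+2*π), p y * t (y - π) := hg2.intervalIntegral_add_eq π 0
      _ = ∫ y in (0:ℝ)..(2*π), p y * t y := by rw [zero_add]; simp only [hshift]
  have i1 : IntervalIntegrable (fun x => p x * t x) volume 0 (2*π) :=
    (hc.mul htc).intervalIntegrable _ _
  have i2 : IntervalIntegrable (fun x => p (x+π) * t x) volume 0 (2*π) :=
    ((hc.comp (by continuity)).mul htc).intervalIntegrable _ _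
  have e3 : ∫ x in (0:ℝ)..(2*π), (p x + p (x+π)) * t x = 0 := by
    have : ∀ x:ℝ, (p x + p (x+π)) * t x = (p 0 + p π) * t x := by
      intro x; rw [hw x]
    simp only [this]
    rw [intervalIntegral.integral_const_mul, hint, mul_zero]
  have e4 : ∫ x in (0:ℝ)..(2*π), (p x + p (x+π)) * t x
      = (∫ x in (0:ℝ)..(2*π), p x * t x) + ∫ x in (0:ℝ)..(2*π), p (x+π) * t x := by
    rw [← intervalIntegral.integral_add i1 i2]
    congr 1; funext x; ring
  rw [e4, e1] at e3
  linarith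

lemma cc_nat_normsq (f : ℝ → ℝ) (hf : Continuous f) (m : ℕ) :
    ‖cc f m‖^2 + ‖cc f (-(m:ℤ))‖^2
      = (((1/π) * ∫ x in (0:ℝ)..(2*π), f x * Real.cos (m*x))^2
        + ((1/π) * ∫ x in (0:ℝ)..(2*π), f x * Real.sin (m*x))^2) / 2 := by
  have hπ : (π:ℝ) ≠ 0 := Real.pi_ne_zero
  rw [cc_re_im f hf (m:ℤ), cc_re_im f hf (-(m:ℤ))]
  have hceq : ∀ x:ℝ, Real.cos ((((-(m:ℤ)):ℤ):ℝ) * x) = Real.cos ((m:ℕ) * x) := by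
    intro x; push_cast; rw [neg_mul, Real.cos_neg]
  have hseq : ∀ x:ℝ, f x * Real.sin ((((-(m:ℤ)):ℤ):ℝ) * x) = -(f x * Real.sin ((m:ℕ) * x)) := by
    intro x; push_cast; rw [neg_mul, Real.sin_neg]; ring
  simp only [hceq, hseq, Int.cast_natCast, intervalIntegral.integral_neg, mul_neg]
  rw [normsq_aux, normsq_aux]
  field_simp
  ring

lemma hasSum_int_pair (g : ℤ → ℝ) (S : ℝ) (hg : HasSum g S) :
    HasSum (fun m : ℕ => g ((m:ℤ)+1) + g (-((m:ℤ)+1))) (S - g 0) := by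
  have h1 : Summable (fun n : ℕ => g ((n:ℤ))) :=
    hg.summable.comp_injective (fun a b h => by exact_mod_cast h)
  have h1' : Summable (fun n : ℕ => g ((n:ℤ)+1)) :=
    hg.summable.comp_injective (i := fun n : ℕ => (n:ℤ)+1) (fun a b h => by
      simp only at h; omega)
  have h2 : Summable (fun n : ℕ => g (-((n:ℤ)+1))) :=
    hg.summable.comp_injective (i := fun n : ℕ => -((n:ℤ)+1)) (fun a b h => by
      simp only at h; omega)
  have key : HasSum g ((∑' n : ℕ, g ((n:ℤ))) + ∑' n : ℕ, g (-((n:ℤ)+1))) :=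
    HasSum.of_nat_of_neg_add_one h1.hasSum (by exact_mod_cast h2.hasSum)
  have hS : S = (∑' n : ℕ, g ((n:ℤ))) + ∑' n : ℕ, g (-((n:ℤ)+1)) := hg.unique key
  have hzero : ∑' n : ℕ, g ((n:ℤ)) = g 0 + ∑' n : ℕ, g ((n:ℤ)+1) := by
    rw [Summable.tsum_eq_zero_add h1]
    push_cast
    rfl
  have hfinal : HasSum (fun m : ℕ => g ((m:ℤ)+1) + g (-((m:ℤ)+1)))
      ((∑' n : ℕ, g ((n:ℤ)+1)) + ∑' n : ℕ, g (-((n:ℤ)+1))) :=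
    h1'.hasSum.add h2.hasSum
  have : S - g 0 = (∑' n : ℕ, g ((n:ℤ)+1)) + ∑' n : ℕ, g (-((n:ℤ)+1)) := by
    rw [hS, hzero]; ring
  rw [this]
  exact hfinal

lemma tsum_nonneg_eq_zero {f : ℕ → ℝ} (hf : Summable f) (h0 : ∀ i, 0 ≤ f i)
    (h : ∑' i, f i = 0) : ∀ i, f i = 0 := by
  intro i
  by_contra hne
  have hpos : 0 < f i := lt_of_le_of_ne (h0 i) (Ne.symm hne)
  have := Summable.tsum_pos hf h0 i hpos
  linarith

set_option maxHeartbeats 1000000 in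
theorem stmt_12 (p : ℝ → ℝ) (hp : ContDiff ℝ 2 p)
    (hper : ∀ x, p (x + 2 * π) = p x)
    (hconv : ∀ x, 0 < p x + deriv (deriv p) x)
    (hwidth : ∀ x y, p x + p (x + π) = p y + p (y + π))
    (a b : ℕ → ℝ)
    (ha : ∀ n, a n = (1 / π) * ∫ x in (0:ℝ)..(2 * π), p x * Real.cos (n * x))
    (hb : ∀ n, b n = (1 / π) * ∫ x in (0:ℝ)..(2 * π), p x * Real.sin (n * x))
    (hsteiner : a 1 = 0 ∧ b 1 = 0)
    (L F Fe Δ δ₂sq : ℝ)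
    (hL : L = ∫ x in (0:ℝ)..(2 * π), p x)
    (hF : F = (1 / 2) * ∫ x in (0:ℝ)..(2 * π), (p x) ^ 2 - (deriv p x) ^ 2)
    (hFe : Fe = (1 / 2) * ∫ x in (0:ℝ)..(2 * π),
      (deriv (deriv p) x) ^ 2 - (deriv p x) ^ 2)
    (hΔ : Δ = L ^ 2 - 4 * π * F)
    (hδ : δ₂sq = π * ∑' k : ℕ, (a (k + 2) ^ 2 + b (k + 2) ^ 2)) :
    π * Fe - Δ ≥ 20 * π * δ₂sq ∧
    Fe ≥ 36 * δ₂sq ∧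
    ((π * Fe - Δ = 20 * π * δ₂sq ∧ Fe = 36 * δ₂sq) ↔
      ∀ n, 5 ≤ n → a n ^ 2 + b n ^ 2 = 0) := by
  have hπ := Real.pi_pos
  have h2π := Real.two_pi_pos
  have hPer : Function.Periodic p (2*π) := hper
  -- regularity
  have hp2 : ContDiff ℝ ((1:WithTop ℕ∞)+1) p := by
    have h12 : ((1:WithTop ℕ∞)+1) = 2 := by norm_num
    rw [h12]; exact hp
  obtain ⟨hd1, -, hcd1⟩ := contDiff_succ_iff_deriv.mp hp2
  obtain ⟨hd2, hc2⟩ := contDiff_one_iff_deriv.mp hcd1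
  have hc1 : Continuous (deriv p) := hcd1.continuous
  have hc0 : Continuous p := hp.continuous
  -- periodicity of derivatives
  have hPer1 : Function.Periodic (deriv p) (2*π) := periodic_deriv_of_periodic p hPer
  have hPer2 : Function.Periodic (deriv (deriv p)) (2*π) :=
    periodic_deriv_of_periodic _ hPer1
  have hb0 : p (2*π) = p 0 := by simpa using hPer 0
  have hb1 : deriv p (2*π) = deriv p 0 := by simpa using hPer1 0
  have hdp : ∀ x, HasDerivAt p (deriv p x) x := fun x => (hd1 x).hasDerivAt
  have hdp2 : ∀ x, HasDerivAt (deriv p) (deriv (deriv p) x) x := fun x => (hd2 x).hasDerivAt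
  -- Fourier side
  set q : ℤ → ℝ := fun n => ‖cc p n‖^2 with hqdef
  set IA := ∫ x in (0:ℝ)..(2*π), (p x)^2 with hIA
  set IB := ∫ x in (0:ℝ)..(2*π), (deriv p x)^2 with hIB
  set IC := ∫ x in (0:ℝ)..(2*π), (deriv (deriv p) x)^2 with hIC
  have P0 : HasSum q ((1/(2*π)) * IA) := parseval p hc0 hPer
  have hq1 : ∀ n : ℤ, ‖cc (deriv p) n‖^2 = (n:ℝ)^2 * q n :=
    cc_deriv_normsq p (deriv p) hdp hc1 hb0
  have hq2 : ∀ n : ℤ, ‖cc (deriv (deriv p)) n‖^2 = (n:ℝ)^2 * ((n:ℝ)^2 * q n) := by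
    intro n
    rw [cc_deriv_normsq (deriv p) (deriv (deriv p)) hdp2 hc2 hb1 n, hq1 n]
  have P1 : HasSum (fun n : ℤ => (n:ℝ)^2 * q n) ((1/(2*π)) * IB) := by
    have := parseval (deriv p) hc1 hPer1
    simpa only [hq1] using this
  have P2 : HasSum (fun n : ℤ => (n:ℝ)^2 * ((n:ℝ)^2 * q n)) ((1/(2*π)) * IC) := by
    have := parseval (deriv (deriv p)) hc2 hPer2
    simpa only [hq2] using this
  -- pair sums
  set u : ℕ → ℝ := fun m => q ((m:ℤ)+1) + q (-((m:ℤ)+1)) with hudef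
  have U0 : HasSum u ((1/(2*π)) * IA - q 0) := hasSum_int_pair q _ P0
  have U1 : HasSum (fun m : ℕ => ((m:ℝ)+1)^2 * u m) ((1/(2*π)) * IB) := by
    have h := hasSum_int_pair (fun n : ℤ => (n:ℝ)^2 * q n) _ P1
    have he : ∀ m : ℕ, (((m:ℤ)+1 : ℤ):ℝ)^2 * q ((m:ℤ)+1)
        + ((-((m:ℤ)+1) : ℤ):ℝ)^2 * q (-((m:ℤ)+1)) = ((m:ℝ)+1)^2 * u m := by
      intro m; rw [hudef]; push_cast; ring
    simp only [he] at h
    simpa using h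
  have U2 : HasSum (fun m : ℕ => ((m:ℝ)+1)^4 * u m) ((1/(2*π)) * IC) := by
    have h := hasSum_int_pair (fun n : ℤ => (n:ℝ)^2 * ((n:ℝ)^2 * q n)) _ P2
    have he : ∀ m : ℕ, (((m:ℤ)+1 : ℤ):ℝ)^2 * ((((m:ℤ)+1 : ℤ):ℝ)^2 * q ((m:ℤ)+1))
        + ((-((m:ℤ)+1) : ℤ):ℝ)^2 * (((-((m:ℤ)+1) : ℤ):ℝ)^2 * q (-((m:ℤ)+1)))
        = ((m:ℝ)+1)^4 * u m := by
      intro m; rw [hudef]; push_cast; ring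
    simp only [he] at h
    simpa using h
  -- q 0 and L
  have hq0 : q 0 = ((1/(2*π)) * L)^2 := by
    show ‖cc p 0‖^2 = (1/(2*π) * L)^2
    have h := cc_re_im p hc0 0
    simp only [Int.cast_zero, zero_mul, Real.cos_zero, Real.sin_zero, mul_zero, mul_one,
      intervalIntegral.integral_zero, Complex.ofReal_zero, sub_zero] at h
    rw [h, hL]
    rw [Complex.norm_real, Real.norm_eq_abs, sq_abs]
  -- u in terms of a, b
  have hu : ∀ m : ℕ, u m = (a (m+1)^2 + b (m+1)^2)/2 := by
    intro m
    have hcast : ((m:ℤ)+1) = (((m+1:ℕ)):ℤ) := by push_cast; ring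
    have h := cc_nat_normsq p hc0 (m+1)
    rw [hudef]
    simp only [hcast]
    rw [h, ha (m+1), hb (m+1)]
  have hu_nonneg : ∀ m, 0 ≤ u m := by
    intro m; rw [hu m]; positivity
  have hu0 : u 0 = 0 := by rw [hu 0, hsteiner.1, hsteiner.2]; norm_num
  -- even coefficients vanish (constant width)
  have hw : ∀ x, p x + p (x + π) = p 0 + p π := by
    intro x; have := hwidth x 0; rwa [zero_add] at this
  have hab_even : ∀ n : ℕ, 1 ≤ n → Even n → a n = 0 ∧ b n = 0 := by
    intro n hn hev
    obtain ⟨k, hk⟩ := hev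
    have hkk : (n:ℝ) = 2*k := by rw [hk]; push_cast; ring
    constructor
    · rw [ha n]
      have := width_coeff_zero p hc0 hPer hw (fun x => Real.cos (n*x))
        (Real.continuous_cos.comp (continuous_const.mul continuous_id))
        (fun y => by
          have : (n:ℝ)*(y+2*π) = (n:ℝ)*y + (n:ℤ)*(2*π) := by push_cast; ring
          simp only [this, Real.cos_add_int_mul_two_pi])
        (fun y => by
          have : (n:ℝ)*(y-π) = (n:ℝ)*y - (k:ℤ)*(2*π) := by rw [hkk]; push_cast; ring
          simp only [this, Real.cos_sub_int_mul_two_pi])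
        (int_cos_period n hn)
      rw [this, mul_zero]
    · rw [hb n]
      have := width_coeff_zero p hc0 hPer hw (fun x => Real.sin (n*x))
        (Real.continuous_sin.comp (continuous_const.mul continuous_id))
        (fun y => by
          have : (n:ℝ)*(y+2*π) = (n:ℝ)*y + (n:ℤ)*(2*π) := by push_cast; ring
          simp only [this, Real.sin_add_int_mul_two_pi])
        (fun y => by
          have : (n:ℝ)*(y-π) = (n:ℝ)*y - (k:ℤ)*(2*π) := by rw [hkk]; push_cast; ring
          simp only [this, Real.sin_sub_int_mul_two_pi])
        (int_sin_period n hn)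
      rw [this, mul_zero]
  have hu_even : ∀ m : ℕ, Even (m+1) → u m = 0 := by
    intro m hev
    obtain ⟨hA, hB⟩ := hab_even (m+1) (by omega) hev
    rw [hu m, hA, hB]
    norm_num
  have hu1 : u 1 = 0 := hu_even 1 (by decide)
  have hu3 : u 3 = 0 := hu_even 3 (by decide)
  -- integral splittings
  have iIA : IntervalIntegrable (fun x => (p x)^2) MeasureTheory.volume 0 (2*π) :=
    ((hc0.pow 2)).intervalIntegrable _ _
  have iIB : IntervalIntegrable (fun x => (deriv p x)^2) MeasureTheory.volume 0 (2*π) :=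
    ((hc1.pow 2)).intervalIntegrable _ _
  have iIC : IntervalIntegrable (fun x => (deriv (deriv p) x)^2) MeasureTheory.volume 0 (2*π) :=
    ((hc2.pow 2)).intervalIntegrable _ _
  have hFval : F = (1/2) * (IA - IB) := by
    rw [hF, hIA, hIB, ← intervalIntegral.integral_sub iIA iIB]
  have hFeval : Fe = (1/2) * (IC - IB) := by
    rw [hFe, hIC, hIB, ← intervalIntegral.integral_sub iIC iIB]
  -- names for the three sums
  set Su := (1/(2*π)) * IA - q 0 with hSu
  set S1v := (1/(2*π)) * IB with hS1v
  set S2v := (1/(2*π)) * IC with hS2v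
  have hIAeq : IA = 2*π*(Su + q 0) := by rw [hSu]; field_simp; ring
  have hIBeq : IB = 2*π*S1v := by rw [hS1v]; field_simp
  have hICeq : IC = 2*π*S2v := by rw [hS2v]; field_simp
  have hL2 : L^2 = 4*π^2 * q 0 := by
    rw [hq0]; field_simp; ring
  -- δ₂sq = 2π Su
  have hδval : δ₂sq = 2*π*Su := by
    have hfun : (fun k : ℕ => a (k+2)^2 + b (k+2)^2) = (fun k : ℕ => 2 * u (k+1)) := by
      funext k
      rw [hu (k+1)]
      ring_nf
    have hshift : Summable (fun k : ℕ => u (k+1)) :=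
      U0.summable.comp_injective (i := fun k : ℕ => k+1) (fun x y h => by simp only at h; omega)
    have htail : ∑' k : ℕ, u (k+1) = Su := by
      have := Summable.tsum_eq_zero_add U0.summable
      rw [U0.tsum_eq, hu0] at this
      linarith
    rw [hδ, hfun, tsum_mul_left, htail]
    ring
  -- combined sums
  have Hc1 : HasSum (fun m : ℕ => (((m:ℝ)+1)^4 - 5*((m:ℝ)+1)^2 - 36) * u m)
      (S2v - 5*S1v - 36*Su) := by
    have h := (U2.sub (U1.mul_left 5)).sub (U0.mul_left 36)
    have he : (fun m : ℕ => ((m:ℝ)+1)^4 * u m - 5*(((m:ℝ)+1)^2 * u m) - 36 * u m)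
        = fun m : ℕ => (((m:ℝ)+1)^4 - 5*((m:ℝ)+1)^2 - 36) * u m := by
      funext m; ring
    rwa [he] at h
  have Hc2 : HasSum (fun m : ℕ => (((m:ℝ)+1)^4 - ((m:ℝ)+1)^2 - 72) * u m)
      (S2v - S1v - 72*Su) := by
    have h := (U2.sub U1).sub (U0.mul_left 72)
    have he : (fun m : ℕ => ((m:ℝ)+1)^4 * u m - ((m:ℝ)+1)^2 * u m - 72 * u m)
        = fun m : ℕ => (((m:ℝ)+1)^4 - ((m:ℝ)+1)^2 - 72) * u m := by
      funext m; ring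
    rwa [he] at h
  have hcoef_big : ∀ m : ℕ, 2 ≤ m → 9 ≤ ((m:ℝ)+1)^2 := by
    intro m hm
    have h3 : (2:ℝ) ≤ (m:ℝ) := by exact_mod_cast hm
    have h3' : (3:ℝ) ≤ (m:ℝ)+1 := by linarith
    calc (9:ℝ) = 3*3 := by norm_num
    _ ≤ ((m:ℝ)+1)*((m:ℝ)+1) := by
        apply mul_le_mul h3' h3' (by norm_num) (by linarith)
    _ = ((m:ℝ)+1)^2 := by ring
  have hterm1 : ∀ m : ℕ, 0 ≤ (((m:ℝ)+1)^4 - 5*((m:ℝ)+1)^2 - 36) * u m := by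
    intro m
    match m with
    | 0 => simp [hu0]
    | 1 => simp [hu1]
    | (k+2) =>
      have h9 := hcoef_big (k+2) (by omega)
      have hcoef : 0 ≤ (((k+2:ℕ):ℝ)+1)^4 - 5*(((k+2:ℕ):ℝ)+1)^2 - 36 := by
        have hfac : (((k+2:ℕ):ℝ)+1)^4 - 5*(((k+2:ℕ):ℝ)+1)^2 - 36
            = ((((k+2:ℕ):ℝ)+1)^2 - 9) * ((((k+2:ℕ):ℝ)+1)^2 + 4) := by ring
        rw [hfac]
        apply mul_nonneg (by linarith) (by positivity)
      exact mul_nonneg hcoef (hu_nonneg _)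
  have hterm2 : ∀ m : ℕ, 0 ≤ (((m:ℝ)+1)^4 - ((m:ℝ)+1)^2 - 72) * u m := by
    intro m
    match m with
    | 0 => simp [hu0]
    | 1 => simp [hu1]
    | (k+2) =>
      have h9 := hcoef_big (k+2) (by omega)
      have hcoef : 0 ≤ (((k+2:ℕ):ℝ)+1)^4 - (((k+2:ℕ):ℝ)+1)^2 - 72 := by
        have hfac : (((k+2:ℕ):ℝ)+1)^4 - (((k+2:ℕ):ℝ)+1)^2 - 72
            = ((((k+2:ℕ):ℝ)+1)^2 - 9) * ((((k+2:ℕ):ℝ)+1)^2 + 8) := by ring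
        rw [hfac]
        apply mul_nonneg (by linarith) (by positivity)
      exact mul_nonneg hcoef (hu_nonneg _)
  -- key algebraic identities
  have key1 : π * Fe - Δ - 20*π*δ₂sq = π^2 * (S2v - 5*S1v - 36*Su) := by
    rw [hFeval, hΔ, hFval, hδval, hL2, hIAeq, hIBeq, hICeq]; ring
  have key2 : Fe - 36*δ₂sq = π * (S2v - S1v - 72*Su) := by
    rw [hFeval, hδval, hIBeq, hICeq]; ring
  have hsum1 : 0 ≤ S2v - 5*S1v - 36*Su := by
    rw [← Hc1.tsum_eq]; exact tsum_nonneg hterm1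
  have hsum2 : 0 ≤ S2v - S1v - 72*Su := by
    rw [← Hc2.tsum_eq]; exact tsum_nonneg hterm2
  have g1 : 0 ≤ π^2 * (S2v - 5*S1v - 36*Su) := mul_nonneg (sq_nonneg π) hsum1
  have g2 : 0 ≤ π * (S2v - S1v - 72*Su) := mul_nonneg hπ.le hsum2
  refine ⟨by linarith, by linarith, ?_⟩
  constructor
  · rintro ⟨he1, he2⟩ n hn
    have hX : π^2 * (S2v - 5*S1v - 36*Su) = 0 := by linarith
    have hX' : S2v - 5*S1v - 36*Su = 0 := by
      have hπ2 : (π:ℝ)^2 ≠ 0 := by positivity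
      rcases mul_eq_zero.mp hX with h | h
      · exact absurd h hπ2
      · exact h
    have hall := tsum_nonneg_eq_zero Hc1.summable hterm1 (by rw [Hc1.tsum_eq, hX'])
    set m := n - 1 with hm
    have hm4 : 2 ≤ m := by omega
    have hcoefpos : 0 < (((m:ℕ):ℝ)+1)^4 - 5*(((m:ℕ):ℝ)+1)^2 - 36 := by
      have h4 : (4:ℝ) ≤ (m:ℝ) := by
        have : 4 ≤ m := by omega
        exact_mod_cast this
      have h25 : 25 ≤ ((m:ℝ)+1)^2 := by
        calc (25:ℝ) = 5*5 := by norm_num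
        _ ≤ ((m:ℝ)+1)*((m:ℝ)+1) := by
            apply mul_le_mul (by linarith) (by linarith) (by norm_num) (by linarith)
        _ = ((m:ℝ)+1)^2 := by ring
      have hfac : (((m:ℕ):ℝ)+1)^4 - 5*(((m:ℕ):ℝ)+1)^2 - 36
          = ((((m:ℕ):ℝ)+1)^2 - 9) * ((((m:ℕ):ℝ)+1)^2 + 4) := by ring
      rw [hfac]
      apply mul_pos (by linarith) (by positivity)
    have hum : u m = 0 := by
      rcases mul_eq_zero.mp (hall m) with h | h
      · linarith
      · exact h
    have hun := hu m
    rw [show m+1 = n from by omega, hum] at hun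
    linarith [hun]
  · intro h5
    have hutail : ∀ m : ℕ, 4 ≤ m → u m = 0 := by
      intro m hm
      have h := hu m
      have h2 := h5 (m+1) (by omega)
      have hnn1 : 0 ≤ a (m+1)^2 := sq_nonneg _
      have hnn2 : 0 ≤ b (m+1)^2 := sq_nonneg _
      rw [h]
      linarith
    have hall1 : (fun m : ℕ => (((m:ℝ)+1)^4 - 5*((m:ℝ)+1)^2 - 36) * u m)
        = fun _ : ℕ => (0:ℝ) := by
      funext m
      match m with
      | 0 => simp [hu0]
      | 1 => simp [hu1]
      | 2 => norm_num
      | 3 => simp [hu3]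
      | (k+4) => rw [hutail (k+4) (by omega)]; ring
    have hall2 : (fun m : ℕ => (((m:ℝ)+1)^4 - ((m:ℝ)+1)^2 - 72) * u m)
        = fun _ : ℕ => (0:ℝ) := by
      funext m
      match m with
      | 0 => simp [hu0]
      | 1 => simp [hu1]
      | 2 => norm_num
      | 3 => simp [hu3]
      | (k+4) => rw [hutail (k+4) (by omega)]; ring
    have hz1 : S2v - 5*S1v - 36*Su = 0 := by
      have h := Hc1
      rw [hall1] at h
      exact (h.unique hasSum_zero)
    have hz2 : S2v - S1v - 72*Su = 0 := by
      have h := Hc2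
      rw [hall2] at h
      exact (h.unique hasSum_zero)
    constructor
    · have : π^2 * (S2v - 5*S1v - 36*Su) = 0 := by rw [hz1]; ring
      linarith
    · have : π * (S2v - S1v - 72*Su) = 0 := by rw [hz2]; ring
      linarith
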